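/- Let φ: ℙ¹ → ℙ¹ be a morphism defined over K with good reduction at a place v, and let P ∈ ℙ¹(K) be a periodic point for φ with minimal period n. Then for all integers i, j, k, one has δ_v(φ^i(P), φ^j(P)) = δ_v(φ^{i+k}(P), φ^{j+k}(P)), where exponents are taken modulo n. -/

import Mathlib

noncomputable section

/-- The `v`-adic logarithmic distance between coordinate representatives of points of
`ℙ¹(K)`. -/
def logDist {K : Type} [Field K] (v : K → WithTop ℤ) (P Q : K × K) : WithTop ℤ :=
  v (P.1 * Q.2 - Q.1 * P.2) - min (v P.1) (v P.2) - min (v Q.1) (v Q.2)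

/-- Evaluation at a point of the pair of binary forms
`F(X,Y) = ∑ aᵢ Xⁱ Y^(d−i)`, `G(X,Y) = ∑ bᵢ Xⁱ Y^(d−i)` of degree `d`,
i.e. the map `φ([X:Y]) = [F(X,Y):G(X,Y)]` in homogeneous coordinates. -/
def evalPair {K : Type} [CommRing K] (d : ℕ) (a b : Fin (d+1) → K) (P : K × K) : K × K :=
  (∑ i : Fin (d+1), a i * P.1 ^ (i:ℕ) * P.2 ^ (d - (i:ℕ)),
   ∑ i : Fin (d+1), b i * P.1 ^ (i:ℕ) * P.2 ^ (d - (i:ℕ)))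

/-- The Sylvester matrix of the two binary forms of degree `d` with coefficient
vectors `a`, `b`. -/
def sylvester {K : Type} [CommRing K] (d : ℕ) (a b : Fin (d+1) → K) :
    Matrix (Fin (d+d)) (Fin (d+d)) K :=
  fun i j =>
    if _ : (i:ℕ) < d then
      if hj : (i:ℕ) ≤ (j:ℕ) ∧ (j:ℕ) ≤ (i:ℕ) + d then a ⟨(j:ℕ) - (i:ℕ), by omega⟩ else 0
    else
      if hj : (i:ℕ) - d ≤ (j:ℕ) ∧ (j:ℕ) ≤ (i:ℕ) then b ⟨(j:ℕ) - ((i:ℕ) - d), by omega⟩ else 0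

/-- The (homogeneous) resultant `Res(F,G)` of the two binary forms of degree `d`,
as the determinant of their Sylvester matrix. -/
def resultant {K : Type} [CommRing K] (d : ℕ) (a b : Fin (d+1) → K) : K :=
  (sylvester d a b).det

/-- The map `φ = [F:G]` has good reduction at the place `v`: after multiplying `F`
and `G` by a suitable nonzero scalar `u` (so as to be in `v`-reduced form: all
coefficients in the valuation ring of `v` and at least one of them a `v`-unit), the
resultant `Res(uF, uG)` is a `v`-unit. -/
def GoodReduction {K : Type} [Field K] (v : K → WithTop ℤ) (d : ℕ)
    (a b : Fin (d+1) → K) : Prop :=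
  ∃ u : K, u ≠ 0 ∧ (∀ i, 0 ≤ v (u * a i) ∧ 0 ≤ v (u * b i)) ∧
    ((∃ i, v (u * a i) = 0) ∨ (∃ i, v (u * b i) = 0)) ∧
    v (resultant d (fun i => u * a i) (fun i => u * b i)) = 0


structure IsVal {K : Type} [Field K] (v : K → WithTop ℤ) : Prop where
  zero : v 0 = ⊤
  fin : ∀ x : K, x ≠ 0 → v x ≠ ⊤
  mul : ∀ x y : K, v (x * y) = v x + v y
  add : ∀ x y : K, min (v x) (v y) ≤ v (x + y)

namespace IsVal

variable {K : Type} [Field K] {v : K → WithTop ℤ} (hv : IsVal v)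

include hv

lemma one : v 1 = 0 := by
  have h := hv.mul 1 1
  rw [one_mul] at h
  obtain ⟨z, hz⟩ := WithTop.ne_top_iff_exists.1 (hv.fin 1 one_ne_zero)
  rw [← hz] at h
  have h' : z = z + z := by exact_mod_cast h
  have hz0 : z = 0 := by omega
  rw [← hz, hz0, WithTop.coe_zero]

lemma neg (x : K) : v (-x) = v x := by
  have h := hv.mul (-1 : K) (-1)
  rw [neg_mul_neg, one_mul, hv.one] at h
  obtain ⟨z, hz⟩ := WithTop.ne_top_iff_exists.1 (hv.fin (-1 : K) (by norm_num))
  rw [← hz] at h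
  have hz0 : z = 0 := by
    have : (0:ℤ) = z + z := by exact_mod_cast h
    omega
  have hv1 : v (-1 : K) = 0 := by rw [← hz, hz0, WithTop.coe_zero]
  calc v (-x) = v ((-1) * x) := by rw [neg_one_mul]
    _ = v (-1 : K) + v x := hv.mul _ _
    _ = v x := by rw [hv1, zero_add]

lemma pow_nonneg {x : K} (h : 0 ≤ v x) (n : ℕ) : 0 ≤ v (x ^ n) := by
  induction n with
  | zero => rw [pow_zero, hv.one]
  | succ n ih => rw [pow_succ, hv.mul]; exact add_nonneg ih h

lemma pow_unit {x : K} (h : v x = 0) (n : ℕ) : v (x ^ n) = 0 := by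
  induction n with
  | zero => rw [pow_zero, hv.one]
  | succ n ih => rw [pow_succ, hv.mul, ih, h, add_zero]

lemma sum_le {ι : Type*} (s : Finset ι) (f : ι → K) (c : WithTop ℤ)
    (h : ∀ i ∈ s, c ≤ v (f i)) : c ≤ v (∑ i ∈ s, f i) := by
  induction s using Finset.cons_induction with
  | empty => rw [Finset.sum_empty, hv.zero]; exact le_top
  | cons a s ha ih =>
    rw [Finset.sum_cons]
    exact le_trans (le_min (h a (Finset.mem_cons_self a s))
      (ih fun i hi => h i (Finset.mem_cons_of_mem hi))) (hv.add _ _)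

lemma prod_nonneg {ι : Type*} (s : Finset ι) (f : ι → K)
    (h : ∀ i ∈ s, 0 ≤ v (f i)) : 0 ≤ v (∏ i ∈ s, f i) := by
  induction s using Finset.cons_induction with
  | empty => rw [Finset.prod_empty, hv.one]
  | cons a s ha ih =>
    rw [Finset.prod_cons, hv.mul]
    exact add_nonneg (h a (Finset.mem_cons_self a s))
      (ih fun i hi => h i (Finset.mem_cons_of_mem hi))

lemma det_nonneg {n : ℕ} (M : Matrix (Fin n) (Fin n) K) (h : ∀ i j, 0 ≤ v (M i j)) :
    0 ≤ v M.det := by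
  rw [Matrix.det_apply]
  refine hv.sum_le _ _ _ fun σ _ => ?_
  have hp : 0 ≤ v (∏ i, M (σ i) i) := hv.prod_nonneg _ _ fun i _ => h _ _
  rcases Int.units_eq_one_or (Equiv.Perm.sign σ) with hs | hs <;> rw [hs]
  · rwa [one_smul]
  · rw [Units.smul_def, Units.val_neg, Units.val_one, neg_smul, one_smul, hv.neg]
    exact hp

lemma inv_unit {x : K} (h : v x = 0) : v x⁻¹ = 0 := by
  have hx : x ≠ 0 := by intro h0; rw [h0, hv.zero] at h; simp at h
  have hm := hv.mul x x⁻¹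
  rw [mul_inv_cancel₀ hx, hv.one, h, zero_add] at hm
  exact hm.symm

lemma ne_zero_of_v_eq_zero {x : K} (h : v x = 0) : x ≠ 0 := by
  intro h0; rw [h0, hv.zero] at h; simp at h

end IsVal

lemma cancel_aux (g : ℤ) (A B : WithTop ℤ) : ((g:WithTop ℤ) + A) - ((g:WithTop ℤ) + B) = A - B := by
  induction A using WithTop.recTopCoe with
  | top => simp
  | coe a =>
    induction B using WithTop.recTopCoe with
    | top => simp
    | coe b =>
      rw [← WithTop.coe_add, ← WithTop.coe_add,
        ← WithTop.LinearOrderedAddCommGroup.coe_sub, ← WithTop.LinearOrderedAddCommGroup.coe_sub]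
      congr 1; ring

lemma ne00_iff {K : Type} [Field K] (Q : K × K) : Q ≠ (0,0) ↔ (Q.1 ≠ 0 ∨ Q.2 ≠ 0) := by
  rw [Ne, Prod.ext_iff, not_and_or]
-- PART 2 (appended to part1 content for testing)
section Fval

variable {K : Type} [Field K]

/-- The binary form value. -/
def fval (d : ℕ) (a : Fin (d+1) → K) (x y : K) : K :=
  ∑ i : Fin (d+1), a i * x ^ (i:ℕ) * y ^ (d - (i:ℕ))

/-- Total-function version of the coefficients. -/
def padf (d : ℕ) (a : Fin (d+1) → K) : ℕ → K :=
  fun t => if h : t < d+1 then a ⟨t, h⟩ else 0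

variable {v : K → WithTop ℤ} (hv : IsVal v)

include hv in
lemma padf_nonneg (d : ℕ) (a : Fin (d+1) → K) (ha : ∀ i, 0 ≤ v (a i)) (t : ℕ) :
    0 ≤ v (padf d a t) := by
  unfold padf
  split
  · exact ha _
  · rw [hv.zero]; exact le_top

lemma fval_eq_range (d : ℕ) (a : Fin (d+1) → K) (x y : K) :
    fval d a x y = ∑ t ∈ Finset.range (d+1), padf d a t * x ^ t * y ^ (d - t) := by
  rw [fval, ← Fin.sum_univ_eq_sum_range (fun t => padf d a t * x ^ t * y ^ (d - t)) (d+1)]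
  refine Finset.sum_congr rfl fun i _ => ?_
  unfold padf
  rw [dif_pos i.isLt]

include hv in
lemma fval_int (d : ℕ) (a : Fin (d+1) → K) {x y : K} (ha : ∀ i, 0 ≤ v (a i))
    (hx : 0 ≤ v x) (hy : 0 ≤ v y) : 0 ≤ v (fval d a x y) := by
  refine hv.sum_le _ _ _ fun i _ => ?_
  rw [hv.mul, hv.mul]
  exact add_nonneg (add_nonneg (ha i) (hv.pow_nonneg hx _)) (hv.pow_nonneg hy _)

lemma fval_smul (d : ℕ) (a : Fin (d+1) → K) (c x y : K) :
    fval d a (c*x) (c*y) = c^d * fval d a x y := by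
  unfold fval
  rw [Finset.mul_sum]
  refine Finset.sum_congr rfl fun i _ => ?_
  have hi : (i:ℕ) < d + 1 := i.isLt
  have h : (i:ℕ) + (d - (i:ℕ)) = d := by omega
  rw [mul_pow, mul_pow,
    show a i * (c ^ (i:ℕ) * x ^ (i:ℕ)) * (c ^ (d-(i:ℕ)) * y ^ (d-(i:ℕ)))
      = (c ^ (i:ℕ) * c ^ (d-(i:ℕ))) * (a i * x ^ (i:ℕ) * y ^ (d-(i:ℕ))) from by ring,
    ← pow_add, h]

lemma fval_rev (d : ℕ) (a : Fin (d+1) → K) (x y : K) :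
    fval d (fun i => a i.rev) y x = fval d a x y := by
  unfold fval
  refine Fintype.sum_equiv (Fin.revPerm) _ _ fun i => ?_
  have hi : (i:ℕ) < d + 1 := i.isLt
  have h1 : ((Fin.revPerm i : Fin (d+1)) : ℕ) = d - (i:ℕ) := by
    simp [Fin.revPerm, Fin.val_rev]
  simp only [Fin.revPerm_apply] at h1 ⊢
  rw [h1]
  have h3 : d - (d - (i:ℕ)) = (i:ℕ) := by omega
  rw [h3]
  ring

lemma pow_sub_vle (hv : IsVal v) {u δ : K} (hu : 0 ≤ v u) (hδ : 0 ≤ v δ) (i : ℕ) :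
    v δ ≤ v ((u+δ)^i - u^i) := by
  induction i with
  | zero => simp only [pow_zero, sub_self, hv.zero]; exact le_top
  | succ i ih =>
    have e : (u+δ)^(i+1) - u^(i+1) = (u+δ) * ((u+δ)^i - u^i) + δ * u^i := by ring
    rw [e]
    refine le_trans (le_min ?_ ?_) (hv.add _ _)
    · rw [hv.mul]
      have h1 : 0 ≤ v (u+δ) := le_trans (le_min hu hδ) (hv.add u δ)
      exact le_trans ih (le_add_of_nonneg_left h1)
    · rw [hv.mul]
      exact le_add_of_nonneg_right (hv.pow_nonneg hu _)

include hv in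
lemma fval_shift (d : ℕ) (a : Fin (d+1) → K) {u w δ : K} (ha : ∀ i, 0 ≤ v (a i))
    (hu : 0 ≤ v u) (hw : 0 ≤ v w) (hδ : 0 ≤ v δ) :
    v δ ≤ v (fval d a (u+δ) w - fval d a u w) := by
  have e : fval d a (u+δ) w - fval d a u w
      = ∑ i : Fin (d+1), a i * ((u+δ)^(i:ℕ) - u^(i:ℕ)) * w^(d-(i:ℕ)) := by
    unfold fval
    rw [← Finset.sum_sub_distrib]
    exact Finset.sum_congr rfl fun i _ => by ring
  rw [e]
  refine hv.sum_le _ _ _ fun i _ => ?_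
  rw [hv.mul, hv.mul]
  calc v δ ≤ v ((u+δ)^(i:ℕ) - u^(i:ℕ)) := pow_sub_vle hv hu hδ _
    _ ≤ v (a i) + v ((u+δ)^(i:ℕ) - u^(i:ℕ)) := le_add_of_nonneg_left (ha i)
    _ ≤ _ := le_add_of_nonneg_right (hv.pow_nonneg hw _)

end Fval
-- PART 3
section NumDiv

variable {K : Type} [Field K] {v : K → WithTop ℤ}

lemma num_core (hv : IsVal v) (d : ℕ) (a b : Fin (d+1) → K)
    (ha : ∀ i, 0 ≤ v (a i)) (hb : ∀ i, 0 ≤ v (b i))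
    {x1 y1 x2 y2 : K}
    (hx1 : 0 ≤ v x1) (hx2 : 0 ≤ v x2) (hy2 : 0 ≤ v y2) (hy1u : v y1 = 0) :
    v (x1*y2 - x2*y1) ≤
      v (fval d a x1 y1 * fval d b x2 y2 - fval d a x2 y2 * fval d b x1 y1) := by
  have hy1 : 0 ≤ v y1 := le_of_eq hy1u.symm
  have hy1ne : y1 ≠ 0 := hv.ne_zero_of_v_eq_zero hy1u
  set δ : K := x2*y1 - x1*y2 with hδdef
  have hδv : v δ = v (x1*y2 - x2*y1) := by
    rw [show δ = -(x1*y2 - x2*y1) from by rw [hδdef]; ring, hv.neg]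
  have hδint : 0 ≤ v δ := by
    rw [show δ = x2*y1 + -(x1*y2) from by rw [hδdef]; ring]
    refine le_trans (le_min ?_ ?_) (hv.add _ _)
    · rw [hv.mul]; exact add_nonneg hx2 hy1
    · rw [hv.neg, hv.mul]; exact add_nonneg hx1 hy2
  have hinv : v y1⁻¹ = 0 := hv.inv_unit hy1u
  have hx2e : x2 = y1⁻¹ * (x1*y2 + δ) := by
    rw [hδdef]; field_simp; ring
  have hy2e : y2 = y1⁻¹ * (y1*y2) := by field_simp
  have hA := fval_smul d a y1⁻¹ (x1*y2 + δ) (y1*y2)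
  rw [← hx2e, ← hy2e] at hA
  have hB := fval_smul d b y1⁻¹ (x1*y2 + δ) (y1*y2)
  rw [← hx2e, ← hy2e] at hB
  set ΔA : K := fval d a (x1*y2 + δ) (y1*y2) - fval d a (x1*y2) (y1*y2) with hΔA
  set ΔB : K := fval d b (x1*y2 + δ) (y1*y2) - fval d b (x1*y2) (y1*y2) with hΔB
  have huu : 0 ≤ v (x1*y2) := by rw [hv.mul]; exact add_nonneg hx1 hy2
  have hww : 0 ≤ v (y1*y2) := by rw [hv.mul]; exact add_nonneg hy1 hy2
  have hAv : v δ ≤ v ΔA := fval_shift hv d a ha huu hww hδint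
  have hBv : v δ ≤ v ΔB := fval_shift hv d b hb huu hww hδint
  have hhomA : fval d a (x1*y2) (y1*y2) = y2^d * fval d a x1 y1 := by
    rw [show x1*y2 = y2*x1 from mul_comm _ _, show y1*y2 = y2*y1 from mul_comm _ _]
    exact fval_smul d a _ _ _
  have hhomB : fval d b (x1*y2) (y1*y2) = y2^d * fval d b x1 y1 := by
    rw [show x1*y2 = y2*x1 from mul_comm _ _, show y1*y2 = y2*y1 from mul_comm _ _]
    exact fval_smul d b _ _ _
  have hA2 : fval d a x2 y2 = (y1⁻¹)^d * (ΔA + y2^d * fval d a x1 y1) := by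
    rw [hA, hΔA, hhomA]; ring
  have hB2 : fval d b x2 y2 = (y1⁻¹)^d * (ΔB + y2^d * fval d b x1 y1) := by
    rw [hB, hΔB, hhomB]; ring
  have key : fval d a x1 y1 * fval d b x2 y2 - fval d a x2 y2 * fval d b x1 y1
      = (y1⁻¹)^d * (fval d a x1 y1 * ΔB - ΔA * fval d b x1 y1) := by
    rw [hA2, hB2]; ring
  rw [key, hv.mul, hv.pow_unit hinv, zero_add, ← hδv]
  have hA1 : 0 ≤ v (fval d a x1 y1) := fval_int hv d a ha hx1 hy1
  have hB1 : 0 ≤ v (fval d b x1 y1) := fval_int hv d b hb hx1 hy1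
  rw [show fval d a x1 y1 * ΔB - ΔA * fval d b x1 y1
      = fval d a x1 y1 * ΔB + -(ΔA * fval d b x1 y1) from by ring]
  refine le_trans (le_min ?_ ?_) (hv.add _ _)
  · rw [hv.mul]; exact le_trans hBv (le_add_of_nonneg_left hA1)
  · rw [hv.neg, hv.mul]; exact le_trans hAv (le_add_of_nonneg_right hB1)

lemma num_div (hv : IsVal v) (d : ℕ) (a b : Fin (d+1) → K)
    (ha : ∀ i, 0 ≤ v (a i)) (hb : ∀ i, 0 ≤ v (b i))
    {x1 y1 x2 y2 : K}
    (hx1 : 0 ≤ v x1) (hy1 : 0 ≤ v y1) (hx2 : 0 ≤ v x2) (hy2 : 0 ≤ v y2)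
    (hmin1 : min (v x1) (v y1) = 0) :
    v (x1*y2 - x2*y1) ≤
      v (fval d a x1 y1 * fval d b x2 y2 - fval d a x2 y2 * fval d b x1 y1) := by
  have h01 : v x1 = 0 ∨ v y1 = 0 := by
    rcases le_total (v x1) (v y1) with h | h
    · left; rw [min_eq_left h] at hmin1; exact hmin1
    · right; rw [min_eq_right h] at hmin1; exact hmin1
  rcases h01 with h | h
  · have := num_core hv d (fun i => a i.rev) (fun i => b i.rev)
      (fun i => ha i.rev) (fun i => hb i.rev)
      (x1 := y1) (y1 := x1) (x2 := y2) (y2 := x2) hy1 hy2 hx2 h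
    rw [fval_rev, fval_rev, fval_rev, fval_rev] at this
    rw [show y1*x2 - y2*x1 = -(x1*y2 - x2*y1) from by ring, hv.neg] at this
    exact this
  · exact num_core hv d a b ha hb hx1 hx2 hy2 h

end NumDiv
-- PART 4
section Sylvester

variable {K : Type} [Field K] {v : K → WithTop ℤ}

def mvec (d : ℕ) (x y : K) : Fin (d+d) → K := fun j => x^(j:ℕ) * y^(d+d-1-(j:ℕ))

lemma sylvester_apply_lt (d : ℕ) (a b : Fin (d+1) → K) (i j : Fin (d+d)) (hi : (i:ℕ) < d) :
    sylvester d a b i j =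
      if (i:ℕ) ≤ (j:ℕ) ∧ (j:ℕ) ≤ (i:ℕ) + d then padf d a ((j:ℕ) - (i:ℕ)) else 0 := by
  unfold sylvester
  rw [dif_pos hi]
  split_ifs with h
  · unfold padf
    rw [dif_pos (by omega)]
  · rfl

lemma sylvester_apply_ge (d : ℕ) (a b : Fin (d+1) → K) (i j : Fin (d+d)) (hi : ¬ (i:ℕ) < d) :
    sylvester d a b i j =
      if (i:ℕ) - d ≤ (j:ℕ) ∧ (j:ℕ) ≤ (i:ℕ) then padf d b ((j:ℕ) - ((i:ℕ) - d)) else 0 := by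
  unfold sylvester
  rw [dif_neg hi]
  split_ifs with h
  · unfold padf
    rw [dif_pos (by omega)]
  · rfl

lemma sylvester_nonneg (hv : IsVal v) (d : ℕ) (a b : Fin (d+1) → K)
    (ha : ∀ i, 0 ≤ v (a i)) (hb : ∀ i, 0 ≤ v (b i)) (i j : Fin (d+d)) :
    0 ≤ v (sylvester d a b i j) := by
  by_cases hi : (i:ℕ) < d
  · rw [sylvester_apply_lt d a b i j hi]
    split_ifs with h
    · exact padf_nonneg hv d a ha _
    · rw [hv.zero]; exact le_top
  · rw [sylvester_apply_ge d a b i j hi]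
    split_ifs with h
    · exact padf_nonneg hv d b hb _
    · rw [hv.zero]; exact le_top

lemma mulVec_sylvester (d : ℕ) (hd : 1 ≤ d) (a b : Fin (d+1) → K) (x y : K) (i : Fin (d+d)) :
    (sylvester d a b).mulVec (mvec d x y) i =
      if (i:ℕ) < d then x^(i:ℕ) * y^(d-1-(i:ℕ)) * fval d a x y
      else x^((i:ℕ)-d) * y^(d+d-1-(i:ℕ)) * fval d b x y := by
  have hilt : (i:ℕ) < d + d := i.isLt
  by_cases hi : (i:ℕ) < d
  · rw [if_pos hi]
    have hmv : (sylvester d a b).mulVec (mvec d x y) i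
        = ∑ j ∈ Finset.range (d+d),
            (if (i:ℕ) ≤ j ∧ j ≤ (i:ℕ) + d then padf d a (j - (i:ℕ)) else 0)
              * (x^j * y^(d+d-1-j)) := by
      rw [← Fin.sum_univ_eq_sum_range
        (fun j => (if (i:ℕ) ≤ j ∧ j ≤ (i:ℕ) + d then padf d a (j - (i:ℕ)) else 0)
          * (x^j * y^(d+d-1-j))) (d+d)]
      simp only [Matrix.mulVec, dotProduct]
      refine Finset.sum_congr rfl fun j _ => ?_
      rw [sylvester_apply_lt d a b i j hi]
      rfl
    rw [hmv]
    have hsub : Finset.Ico (i:ℕ) ((i:ℕ)+d+1) ⊆ Finset.range (d+d) := by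
      intro t ht
      simp only [Finset.mem_Ico] at ht
      simp only [Finset.mem_range]
      omega
    have hvan : ∀ jn ∈ Finset.range (d+d), jn ∉ Finset.Ico (i:ℕ) ((i:ℕ)+d+1) →
        (if (i:ℕ) ≤ jn ∧ jn ≤ (i:ℕ) + d then padf d a (jn - (i:ℕ)) else 0)
          * (x^jn * y^(d+d-1-jn)) = 0 := by
      intro jn _ hn
      simp only [Finset.mem_Ico, not_and_or, not_le, not_lt] at hn
      rw [if_neg (by omega), zero_mul]
    rw [← Finset.sum_subset hsub hvan, Finset.sum_Ico_eq_sum_range]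
    have hrange : (i:ℕ)+d+1-(i:ℕ) = d+1 := by omega
    rw [hrange, fval_eq_range, Finset.mul_sum]
    refine Finset.sum_congr rfl fun t ht => ?_
    rw [Finset.mem_range] at ht
    rw [if_pos ⟨Nat.le_add_right _ _, by omega⟩]
    have e1 : (i:ℕ) + t - (i:ℕ) = t := by omega
    have e2 : x ^ ((i:ℕ)+t) = x ^ (i:ℕ) * x ^ t := pow_add x _ _
    have e3 : y ^ (d+d-1-((i:ℕ)+t)) = y ^ (d-1-(i:ℕ)) * y ^ (d-t) := by
      rw [← pow_add]
      congr 1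
      omega
    rw [e1, e2, e3]
    ring
  · rw [if_neg hi]
    have hmv : (sylvester d a b).mulVec (mvec d x y) i
        = ∑ j ∈ Finset.range (d+d),
            (if (i:ℕ) - d ≤ j ∧ j ≤ (i:ℕ) then padf d b (j - ((i:ℕ) - d)) else 0)
              * (x^j * y^(d+d-1-j)) := by
      rw [← Fin.sum_univ_eq_sum_range
        (fun j => (if (i:ℕ) - d ≤ j ∧ j ≤ (i:ℕ) then padf d b (j - ((i:ℕ) - d)) else 0)
          * (x^j * y^(d+d-1-j))) (d+d)]
      simp only [Matrix.mulVec, dotProduct]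
      refine Finset.sum_congr rfl fun j _ => ?_
      rw [sylvester_apply_ge d a b i j hi]
      rfl
    rw [hmv]
    have hsub : Finset.Ico ((i:ℕ)-d) ((i:ℕ)+1) ⊆ Finset.range (d+d) := by
      intro t ht
      simp only [Finset.mem_Ico] at ht
      simp only [Finset.mem_range]
      omega
    have hvan : ∀ jn ∈ Finset.range (d+d), jn ∉ Finset.Ico ((i:ℕ)-d) ((i:ℕ)+1) →
        (if (i:ℕ) - d ≤ jn ∧ jn ≤ (i:ℕ) then padf d b (jn - ((i:ℕ) - d)) else 0)
          * (x^jn * y^(d+d-1-jn)) = 0 := by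
      intro jn _ hn
      simp only [Finset.mem_Ico, not_and_or, not_le, not_lt] at hn
      rw [if_neg (by omega), zero_mul]
    rw [← Finset.sum_subset hsub hvan, Finset.sum_Ico_eq_sum_range]
    have hrange : (i:ℕ)+1-((i:ℕ)-d) = d+1 := by omega
    rw [hrange, fval_eq_range, Finset.mul_sum]
    refine Finset.sum_congr rfl fun t ht => ?_
    rw [Finset.mem_range] at ht
    rw [if_pos ⟨Nat.le_add_right _ _, by omega⟩]
    have e1 : (i:ℕ) - d + t - ((i:ℕ) - d) = t := by omega
    have e2 : x ^ ((i:ℕ)-d+t) = x ^ ((i:ℕ)-d) * x ^ t := pow_add x _ _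
    have e3 : y ^ (d+d-1-((i:ℕ)-d+t)) = y ^ (d+d-1-(i:ℕ)) * y ^ (d-t) := by
      rw [← pow_add]
      congr 1
      omega
    rw [e1, e2, e3]
    ring

lemma eval_unit (hv : IsVal v) (d : ℕ) (hd : 1 ≤ d) (a b : Fin (d+1) → K)
    (ha : ∀ i, 0 ≤ v (a i)) (hb : ∀ i, 0 ≤ v (b i))
    (hres : v (resultant d a b) = 0)
    {x y : K} (hxy : min (v x) (v y) = 0) :
    min (v (fval d a x y)) (v (fval d b x y)) = 0 := by
  have hx : 0 ≤ v x := le_trans (le_of_eq hxy.symm) (min_le_left _ _)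
  have hy : 0 ≤ v y := le_trans (le_of_eq hxy.symm) (min_le_right _ _)
  refine le_antisymm ?_ (le_min (fval_int hv d a ha hx hy) (fval_int hv d b hb hx hy))
  set M := sylvester d a b with hM
  have hid : ∀ jj : Fin (d+d), (resultant d a b) * mvec d x y jj
      = ∑ i : Fin (d+d), M.adjugate jj i * M.mulVec (mvec d x y) i := by
    intro jj
    have h1 : M.adjugate.mulVec (M.mulVec (mvec d x y)) = (resultant d a b) • (mvec d x y) := by
      rw [Matrix.mulVec_mulVec, Matrix.adjugate_mul]
      rw [show M.det = resultant d a b from rfl]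
      rw [Matrix.smul_mulVec, Matrix.one_mulVec]
    have h2 := congrFun h1 jj
    simp only [Matrix.mulVec, dotProduct, Pi.smul_apply, smul_eq_mul] at h2
    rw [← h2]
    rfl
  have hadj : ∀ jj i, 0 ≤ v (M.adjugate jj i) := by
    intro jj i
    rw [Matrix.adjugate_apply]
    refine hv.det_nonneg _ fun r c => ?_
    rw [Matrix.updateRow_apply]
    split_ifs with hr
    · rw [Pi.single_apply]
      split_ifs with hc
      · rw [hv.one]
      · rw [hv.zero]; exact le_top
    · exact sylvester_nonneg hv d a b ha hb r c
  have h01 : v x = 0 ∨ v y = 0 := by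
    rcases le_total (v x) (v y) with h | h
    · left; rw [min_eq_left h] at hxy; exact hxy
    · right; rw [min_eq_right h] at hxy; exact hxy
  obtain ⟨jj, hjj⟩ : ∃ jj : Fin (d+d), v (mvec d x y jj) = 0 := by
    rcases h01 with h | h
    · refine ⟨⟨d+d-1, by omega⟩, ?_⟩
      show v (x^(d+d-1) * y^(d+d-1-(d+d-1))) = 0
      rw [show d+d-1-(d+d-1) = 0 from by omega, pow_zero, mul_one, hv.pow_unit h]
    · refine ⟨⟨0, by omega⟩, ?_⟩
      show v (x^0 * y^(d+d-1-0)) = 0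
      rw [pow_zero, one_mul]
      exact hv.pow_unit h _
  have h0 : v ((resultant d a b) * mvec d x y jj) = 0 := by
    rw [hv.mul, hres, hjj, add_zero]
  rw [hid jj] at h0
  rw [← h0]
  refine hv.sum_le _ _ _ fun i _ => ?_
  rw [mulVec_sylvester d hd a b x y i]
  by_cases hi : (i:ℕ) < d
  · rw [if_pos hi, hv.mul, hv.mul]
    have hmon : 0 ≤ v (x^(i:ℕ) * y^(d-1-(i:ℕ))) := by
      rw [hv.mul]; exact add_nonneg (hv.pow_nonneg hx _) (hv.pow_nonneg hy _)
    calc min (v (fval d a x y)) (v (fval d b x y)) ≤ v (fval d a x y) := min_le_left _ _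
      _ ≤ v (x^(i:ℕ) * y^(d-1-(i:ℕ))) + v (fval d a x y) := le_add_of_nonneg_left hmon
      _ ≤ _ := le_add_of_nonneg_left (hadj jj i)
  · rw [if_neg hi, hv.mul, hv.mul]
    have hmon : 0 ≤ v (x^((i:ℕ)-d) * y^(d+d-1-(i:ℕ))) := by
      rw [hv.mul]; exact add_nonneg (hv.pow_nonneg hx _) (hv.pow_nonneg hy _)
    calc min (v (fval d a x y)) (v (fval d b x y)) ≤ v (fval d b x y) := min_le_right _ _
      _ ≤ v (x^((i:ℕ)-d) * y^(d+d-1-(i:ℕ))) + v (fval d b x y) := le_add_of_nonneg_left hmon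
      _ ≤ _ := le_add_of_nonneg_left (hadj jj i)

end Sylvester
-- PART 5
section LogDist

variable {K : Type} [Field K] {v : K → WithTop ℤ}

lemma logDist_smul_left (hv : IsVal v) {c : K} (hc : c ≠ 0) (P Q : K × K) :
    logDist v (c • P) Q = logDist v P Q := by
  obtain ⟨g, hg⟩ := WithTop.ne_top_iff_exists.1 (hv.fin c hc)
  unfold logDist
  have h1 : (c • P).1 = c * P.1 := rfl
  have h2 : (c • P).2 = c * P.2 := rfl
  rw [h1, h2, show c*P.1 * Q.2 - Q.1 * (c*P.2) = c * (P.1*Q.2 - Q.1*P.2) from by ring,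
    hv.mul, hv.mul, hv.mul, ← hg, min_add_add_left, cancel_aux]

lemma logDist_symm (hv : IsVal v) (P Q : K × K) :
    logDist v P Q = logDist v Q P := by
  unfold logDist
  have h1 : v (Q.1*P.2 - P.1*Q.2) = v (P.1*Q.2 - Q.1*P.2) := by
    rw [show Q.1*P.2 - P.1*Q.2 = -(P.1*Q.2 - Q.1*P.2) from by ring, hv.neg]
  rw [h1]
  simp only [sub_eq_add_neg]
  rw [add_right_comm]

lemma logDist_smul_right (hv : IsVal v) {c : K} (hc : c ≠ 0) (P Q : K × K) :
    logDist v P (c • Q) = logDist v P Q := by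
  rw [logDist_symm hv P (c • Q), logDist_smul_left hv hc Q P, logDist_symm hv Q P]

lemma logDist_eq_num (hv : IsVal v) {P Q : K × K}
    (hP : min (v P.1) (v P.2) = 0) (hQ : min (v Q.1) (v Q.2) = 0) :
    logDist v P Q = v (P.1*Q.2 - Q.1*P.2) := by
  unfold logDist
  rw [hP, hQ]
  simp

lemma evalPair_eq (d : ℕ) (a b : Fin (d+1) → K) (P : K × K) :
    evalPair d a b P = (fval d a P.1 P.2, fval d b P.1 P.2) := rfl

lemma evalPair_smul (d : ℕ) (a b : Fin (d+1) → K) (c : K) (P : K × K) :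
    evalPair d a b (c • P) = c^d • evalPair d a b P := by
  rw [evalPair_eq, evalPair_eq]
  have h1 : (c • P).1 = c * P.1 := rfl
  have h2 : (c • P).2 = c * P.2 := rfl
  rw [h1, h2, fval_smul, fval_smul]
  rfl

lemma fval_coeff_mul (d : ℕ) (a : Fin (d+1) → K) (u x y : K) :
    fval d (fun i => u * a i) x y = u * fval d a x y := by
  unfold fval
  rw [Finset.mul_sum]
  exact Finset.sum_congr rfl fun i _ => by ring

lemma evalPair_coeff_mul (d : ℕ) (a b : Fin (d+1) → K) (u : K) (P : K × K) :
    evalPair d (fun i => u * a i) (fun i => u * b i) P = u • evalPair d a b P := by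
  rw [evalPair_eq, evalPair_eq, fval_coeff_mul, fval_coeff_mul]
  rfl

lemma exists_norm (hv : IsVal v) (hvdisc : ∀ n : ℤ, ∃ x : K, v x = (n : WithTop ℤ))
    (Q : K × K) (hQ : Q ≠ (0,0)) :
    ∃ c : K, c ≠ 0 ∧ min (v (c * Q.1)) (v (c * Q.2)) = 0 := by
  have hQ1 : Q.1 ≠ 0 ∨ Q.2 ≠ 0 := (ne00_iff Q).1 hQ
  have hmne : min (v Q.1) (v Q.2) ≠ ⊤ := by
    rcases hQ1 with h | h
    · exact fun ht => (hv.fin _ h) (top_le_iff.1 (ht ▸ min_le_left (v Q.1) (v Q.2)))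
    · exact fun ht => (hv.fin _ h) (top_le_iff.1 (ht ▸ min_le_right (v Q.1) (v Q.2)))
  obtain ⟨m0, hm0⟩ := WithTop.ne_top_iff_exists.1 hmne
  obtain ⟨c, hc⟩ := hvdisc (-m0)
  have hcne : c ≠ 0 := by
    intro h
    rw [h, hv.zero] at hc
    exact WithTop.top_ne_coe hc
  refine ⟨c, hcne, ?_⟩
  rw [hv.mul, hv.mul, min_add_add_left, ← hm0, hc, ← WithTop.coe_add]
  norm_num

/-- Non-vanishing of the evaluation on nonzero points, for a reduced pair of forms. -/
lemma eval_ne_zero (hv : IsVal v) (hvdisc : ∀ n : ℤ, ∃ x : K, v x = (n : WithTop ℤ))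
    (d : ℕ) (hd : 1 ≤ d) (a b : Fin (d+1) → K)
    (ha : ∀ i, 0 ≤ v (a i)) (hb : ∀ i, 0 ≤ v (b i))
    (hres : v (resultant d a b) = 0)
    (Q : K × K) (hQ : Q ≠ (0,0)) : evalPair d a b Q ≠ (0,0) := by
  obtain ⟨c, hc0, hcmin⟩ := exists_norm hv hvdisc Q hQ
  have hmin := eval_unit hv d hd a b ha hb hres (x := c * Q.1) (y := c * Q.2) hcmin
  intro h00
  have h1 : evalPair d a b (c • Q) = c^d • evalPair d a b Q := evalPair_smul d a b c Q
  rw [h00] at h1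
  have h2 : evalPair d a b (c • Q) = (0, 0) := by
    rw [h1]
    show (c^d * 0, c^d * 0) = (0, 0)
    rw [mul_zero]
  have h3 : (evalPair d a b (c • Q)).1 = fval d a (c * Q.1) (c * Q.2) := rfl
  have h4 : (evalPair d a b (c • Q)).2 = fval d b (c * Q.1) (c * Q.2) := rfl
  rw [← h3, ← h4, h2] at hmin
  show False
  rw [show ((0,0) : K × K).1 = 0 from rfl, show ((0,0) : K × K).2 = 0 from rfl, hv.zero] at hmin
  simp at hmin

/-- One-step monotonicity of the logarithmic distance, for a reduced pair of forms. -/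
lemma logDist_le_eval (hv : IsVal v) (hvdisc : ∀ n : ℤ, ∃ x : K, v x = (n : WithTop ℤ))
    (d : ℕ) (hd : 1 ≤ d) (a b : Fin (d+1) → K)
    (ha : ∀ i, 0 ≤ v (a i)) (hb : ∀ i, 0 ≤ v (b i))
    (hres : v (resultant d a b) = 0)
    (Q1 Q2 : K × K) (h1 : Q1 ≠ (0,0)) (h2 : Q2 ≠ (0,0)) :
    logDist v Q1 Q2 ≤ logDist v (evalPair d a b Q1) (evalPair d a b Q2) := by
  obtain ⟨c1, hc1, hm1⟩ := exists_norm hv hvdisc Q1 h1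
  obtain ⟨c2, hc2, hm2⟩ := exists_norm hv hvdisc Q2 h2
  have e1 : logDist v Q1 Q2 = logDist v (c1 • Q1) (c2 • Q2) := by
    rw [logDist_smul_left hv hc1, logDist_smul_right hv hc2]
  have e2 : logDist v (evalPair d a b Q1) (evalPair d a b Q2)
      = logDist v (evalPair d a b (c1 • Q1)) (evalPair d a b (c2 • Q2)) := by
    rw [evalPair_smul, evalPair_smul, logDist_smul_left hv (pow_ne_zero d hc1),
      logDist_smul_right hv (pow_ne_zero d hc2)]
  rw [e1, e2]
  have hx1 : 0 ≤ v ((c1 • Q1).1) := le_trans (le_of_eq hm1.symm) (min_le_left _ _)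
  have hy1 : 0 ≤ v ((c1 • Q1).2) := le_trans (le_of_eq hm1.symm) (min_le_right _ _)
  have hx2 : 0 ≤ v ((c2 • Q2).1) := le_trans (le_of_eq hm2.symm) (min_le_left _ _)
  have hy2 : 0 ≤ v ((c2 • Q2).2) := le_trans (le_of_eq hm2.symm) (min_le_right _ _)
  have hminA : min (v ((c1 • Q1).1)) (v ((c1 • Q1).2)) = 0 := hm1
  have hminB : min (v ((c2 • Q2).1)) (v ((c2 • Q2).2)) = 0 := hm2
  have hminFA := eval_unit hv d hd a b ha hb hres (x := (c1 • Q1).1) (y := (c1 • Q1).2) hminA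
  have hminFB := eval_unit hv d hd a b ha hb hres (x := (c2 • Q2).1) (y := (c2 • Q2).2) hminB
  rw [logDist_eq_num hv hminA hminB, evalPair_eq, evalPair_eq,
    logDist_eq_num hv (P := (fval d a (c1 • Q1).1 (c1 • Q1).2, fval d b (c1 • Q1).1 (c1 • Q1).2))
      (Q := (fval d a (c2 • Q2).1 (c2 • Q2).2, fval d b (c2 • Q2).1 (c2 • Q2).2)) hminFA hminFB]
  exact num_div hv d a b ha hb hx1 hy1 hx2 hy2 hminA

end LogDist

/-- Let `φ` be a morphism of `ℙ¹` defined over `K` with good reduction at the place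
`v`, and let `P ∈ ℙ¹(K)` be a periodic point of `φ` with minimal period `n`.  Then
`δ_v(φ^i(P), φ^j(P)) = δ_v(φ^{i+k}(P), φ^{j+k}(P))` for all `i, j, k`. -/
theorem logDist_iterate_shift_invariant {K : Type} [Field K] (v : K → WithTop ℤ)
    (hv0 : v 0 = ⊤) (hvfin : ∀ x : K, x ≠ 0 → v x ≠ ⊤)
    (hvmul : ∀ x y : K, v (x * y) = v x + v y)
    (hvadd : ∀ x y : K, min (v x) (v y) ≤ v (x + y))
    (hvdisc : ∀ n : ℤ, ∃ x : K, v x = (n : WithTop ℤ))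
    (d : ℕ) (hd : 1 ≤ d) (a b : Fin (d+1) → K)
    (hgood : GoodReduction v d a b)
    (P : K × K) (hP : P ≠ (0, 0)) (n : ℕ) (hn : 0 < n)
    (hper : ∃ c : K, c ≠ 0 ∧ (evalPair d a b)^[n] P = c • P)
    (hmin : ∀ m : ℕ, 0 < m →
      (∃ c : K, c ≠ 0 ∧ (evalPair d a b)^[m] P = c • P) → n ≤ m)
    (i j k : ℕ) :
    logDist v ((evalPair d a b)^[i] P) ((evalPair d a b)^[j] P) =
      logDist v ((evalPair d a b)^[i + k] P) ((evalPair d a b)^[j + k] P) := by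
  classical
  have hv' : IsVal v := ⟨hv0, hvfin, hvmul, hvadd⟩
  obtain ⟨u, hu0, hco, _hsome, hres⟩ := hgood
  have hAint : ∀ i2, 0 ≤ v ((fun i2 => u * a i2) i2) := fun i2 => (hco i2).1
  have hBint : ∀ i2, 0 ≤ v ((fun i2 => u * b i2) i2) := fun i2 => (hco i2).2
  -- all iterates are nonzero
  have hφ_ne : ∀ t : ℕ, (evalPair d a b)^[t] P ≠ (0,0) := by
    intro t
    induction t with
    | zero => simpa using hP
    | succ t ih =>
      rw [Function.iterate_succ_apply']
      intro h00
      have hne := eval_ne_zero hv' hvdisc d hd _ _ hAint hBint hres _ ih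
      rw [evalPair_coeff_mul] at hne
      apply hne
      rw [h00]
      show (u * 0, u * 0) = ((0:K), (0:K))
      rw [mul_zero]
  -- one-step monotonicity for the original (non-reduced) map
  have hstep : ∀ Q1 Q2 : K × K, Q1 ≠ (0,0) → Q2 ≠ (0,0) →
      logDist v Q1 Q2 ≤ logDist v (evalPair d a b Q1) (evalPair d a b Q2) := by
    intro Q1 Q2 h1 h2
    have h := logDist_le_eval hv' hvdisc d hd _ _ hAint hBint hres Q1 Q2 h1 h2
    rw [evalPair_coeff_mul, evalPair_coeff_mul, logDist_smul_left hv' hu0,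
      logDist_smul_right hv' hu0] at h
    exact h
  -- monotonicity along the orbit
  have hmono : ∀ s t : ℕ, s ≤ t →
      logDist v ((evalPair d a b)^[i+s] P) ((evalPair d a b)^[j+s] P) ≤
        logDist v ((evalPair d a b)^[i+t] P) ((evalPair d a b)^[j+t] P) := by
    intro s t hst
    induction t, hst using Nat.le_induction with
    | base => exact le_refl _
    | succ t ht ih =>
      refine le_trans ih ?_
      rw [show i + (t+1) = (i + t) + 1 from by omega, show j + (t+1) = (j+t)+1 from by omega,
        Function.iterate_succ_apply', Function.iterate_succ_apply']
      exact hstep _ _ (hφ_ne _) (hφ_ne _)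
  -- iterates commute with scaling up to a nonzero scalar
  have hiter_smul : ∀ (t : ℕ) (Q : K × K) (e : K), e ≠ 0 →
      ∃ e' : K, e' ≠ 0 ∧ (evalPair d a b)^[t] (e • Q) = e' • (evalPair d a b)^[t] Q := by
    intro t
    induction t with
    | zero => exact fun Q e he => ⟨e, he, rfl⟩
    | succ t ih =>
      intro Q e he
      obtain ⟨e', he', hE⟩ := ih Q e he
      refine ⟨e'^d, pow_ne_zero _ he', ?_⟩
      rw [Function.iterate_succ_apply', Function.iterate_succ_apply', hE, evalPair_smul]
  -- periodic return up to scalar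
  obtain ⟨c, hc0, hcP⟩ := hper
  have hret : ∀ m : ℕ, ∃ e : K, e ≠ 0 ∧ (evalPair d a b)^[m*n] P = e • P := by
    intro m
    induction m with
    | zero => exact ⟨1, one_ne_zero, by simp⟩
    | succ m ih =>
      obtain ⟨e, he, hE⟩ := ih
      obtain ⟨e', he', hE'⟩ := hiter_smul n P e he
      refine ⟨e' * c, mul_ne_zero he' hc0, ?_⟩
      rw [show (m+1)*n = n + m*n from by ring, Function.iterate_add_apply, hE, hE', hcP,
        smul_smul]
  obtain ⟨e, he, hE⟩ := hret k
  have hLret : logDist v ((evalPair d a b)^[i + k*n] P) ((evalPair d a b)^[j + k*n] P)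
      = logDist v ((evalPair d a b)^[i] P) ((evalPair d a b)^[j] P) := by
    obtain ⟨e1, he1, hE1⟩ := hiter_smul i P e he
    obtain ⟨e2, he2, hE2⟩ := hiter_smul j P e he
    rw [Function.iterate_add_apply _ i (k*n), Function.iterate_add_apply _ j (k*n), hE,
      hE1, hE2, logDist_smul_left hv' he1, logDist_smul_right hv' he2]
  refine le_antisymm ?_ ?_
  · have h := hmono 0 k (Nat.zero_le k)
    simpa using h
  · have hkn : k ≤ k * n := Nat.le_mul_of_pos_right k hn
    have h := hmono k (k*n) hkn
    rw [hLret] at h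
    simpa using h
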